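/- arXiv:1012.0964 — 5 statements merged into one kernel-verified Lean document; each statement's English description precedes it below -/
import Mathlib

section
/- Generalised Wilson's theorem: let p be a prime and k a positive integer with p^k ≠ 4. If x and y are nonnegative integers with x ≡ y (mod p^k), then Γ_p(x) ≡ Γ_p(y) (mod p^k). -/
open Finset

/-- The `p`-adic gamma function on the natural numbers:
`Γ_p(k) = (-1)^k ∏_{t < k, gcd(t,p) = 1} t`. -/
def padicGammaNat (p k : ℕ) : ℤ :=
  (-1) ^ k * ∏ t ∈ (range k).filter (fun t => Nat.Coprime t p), (t : ℤ)

lemma int_sq_one_odd (p : ℕ) (hp : p.Prime) (hodd : p ≠ 2) (k : ℕ) (n : ℤ)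
    (h : (p:ℤ)^k ∣ n^2 - 1) : (p:ℤ)^k ∣ n - 1 ∨ (p:ℤ)^k ∣ n + 1 := by
  have hpz : Prime (p:ℤ) := Nat.prime_iff_prime_int.mp hp
  have hfac : n^2 - 1 = (n - 1) * (n + 1) := by ring
  rw [hfac] at h
  by_cases hd : (p:ℤ) ∣ n + 1
  · right
    have hnd : ¬ (p:ℤ) ∣ n - 1 := by
      intro hd'
      have h2' : (p:ℤ) ∣ 2 := by
        have := dvd_sub hd hd'
        simpa using this
      have h2 : (p:ℕ) ∣ 2 := by exact_mod_cast h2'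
      exact hodd ((Nat.prime_dvd_prime_iff_eq hp Nat.prime_two).mp h2)
    have hcop : IsCoprime ((p:ℤ)^k) (n - 1) :=
      ((hpz.coprime_iff_not_dvd).mpr hnd).pow_left
    exact hcop.dvd_of_dvd_mul_left h
  · left
    have hcop : IsCoprime ((p:ℤ)^k) (n + 1) :=
      ((hpz.coprime_iff_not_dvd).mpr hd).pow_left
    exact hcop.dvd_of_dvd_mul_right h


lemma int_sq_one_two (k : ℕ) (hk : 3 ≤ k) (n : ℤ) (hn : Odd n)
    (h : (2:ℤ)^k ∣ n^2 - 1) : (2:ℤ)^(k-1) ∣ n - 1 ∨ (2:ℤ)^(k-1) ∣ n + 1 := by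
  obtain ⟨m, rfl⟩ := hn
  have h2 : Prime (2:ℤ) := Int.prime_two
  have h' : (2:ℤ)^(k-2) ∣ m * (m + 1) := by
    have hd : (2:ℤ)^2 * 2^(k-2) ∣ 2^2 * (m * (m+1)) := by
      have he : (2*m+1)^2 - 1 = 2^2 * (m * (m+1)) := by ring
      have hc : (2:ℤ)^k = 2^2 * 2^(k-2) := by rw [← pow_add]; congr 1; omega
      rw [he, hc] at h; exact h
    exact (mul_dvd_mul_iff_left (by positivity : ((2:ℤ)^2) ≠ 0)).mp hd
  have hk1 : k - 1 = (k-2) + 1 := by omega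
  rcases Int.even_or_odd m with he | ho
  · -- m even, m+1 odd : 2^(k-2) ∣ m
    left
    have hnd : ¬ (2:ℤ) ∣ m + 1 := by
      rcases he with ⟨a, rfl⟩; rintro ⟨b, hb⟩; omega
    have hcop : IsCoprime ((2:ℤ)^(k-2)) (m+1) := ((h2.coprime_iff_not_dvd).mpr hnd).pow_left
    have : (2:ℤ)^(k-2) ∣ m := hcop.dvd_of_dvd_mul_right h'
    have : (2:ℤ)^(k-1) ∣ 2 * m := by
      rw [hk1, pow_succ, mul_comm]
      exact mul_dvd_mul_left 2 this
    have heq : 2 * m + 1 - 1 = 2 * m := by ring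
    rw [heq]; exact this
  · -- m odd : 2^(k-2) ∣ m+1
    right
    have hnd : ¬ (2:ℤ) ∣ m := by
      rcases ho with ⟨a, rfl⟩; rintro ⟨b, hb⟩; omega
    have hcop : IsCoprime ((2:ℤ)^(k-2)) m := ((h2.coprime_iff_not_dvd).mpr hnd).pow_left
    have hdd : (2:ℤ)^(k-2) ∣ m + 1 := hcop.dvd_of_dvd_mul_left h'
    have : (2:ℤ)^(k-1) ∣ 2 * (m + 1) := by
      rw [hk1, pow_succ, mul_comm]
      exact mul_dvd_mul_left 2 hdd
    have heq : 2 * m + 1 + 1 = 2 * (m + 1) := by ring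
    rw [heq]; exact this

lemma unit_sq_dvd (p k : ℕ) (hp : 0 < p^k) (u : (ZMod (p^k))ˣ)
    (h : (u : ZMod (p^k)) * u = 1) :
    ∃ n : ℕ, ((n : ℤ) : ZMod (p^k)) = (u : ZMod (p^k)) ∧ Nat.Coprime n (p^k) ∧
      (p:ℤ)^k ∣ (n:ℤ)^2 - 1 := by
  haveI : NeZero (p^k) := ⟨hp.ne'⟩
  refine ⟨ZMod.val (u : ZMod (p^k)), ?_, ZMod.val_coe_unit_coprime u, ?_⟩
  · push_cast
    simp [ZMod.natCast_val, ZMod.cast_id]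
  · have h0 : ((((ZMod.val (u : ZMod (p^k)) : ℤ))^2 - 1 : ℤ) : ZMod (p^k)) = 0 := by
      push_cast
      rw [ZMod.natCast_val, ZMod.cast_id, sq, h]
      ring
    have := (ZMod.intCast_zmod_eq_zero_iff_dvd _ _).mp h0
    push_cast at this
    exact this

lemma dvd_to_eq (p k : ℕ) (hp : 0 < p^k) (n : ℕ) (a : ℤ)
    (h : (p:ℤ)^k ∣ (n:ℤ) - a) : ((n : ℕ) : ZMod (p^k)) = ((a : ℤ) : ZMod (p^k)) := by
  have h0 : (((n:ℤ) - a : ℤ) : ZMod (p^k)) = 0 := by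
    rw [ZMod.intCast_zmod_eq_zero_iff_dvd]
    push_cast
    exact h
  push_cast at h0
  linear_combination h0

lemma sq_one_classify_odd (p k : ℕ) (hp : p.Prime) (hodd : p ≠ 2) (u : (ZMod (p^k))ˣ)
    (h : (u : ZMod (p^k)) * u = 1) : (u : ZMod (p^k)) = 1 ∨ (u : ZMod (p^k)) = -1 := by
  have hp0 : 0 < p^k := pow_pos hp.pos k
  obtain ⟨n, hn, -, hdvd⟩ := unit_sq_dvd p k hp0 u h
  rcases int_sq_one_odd p hp hodd k n hdvd with hd | hd
  · left
    have := dvd_to_eq p k hp0 n 1 (by simpa using hd)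
    rw [← hn]; push_cast at this ⊢; simpa using this
  · right
    have := dvd_to_eq p k hp0 n (-1) (by simpa using hd)
    rw [← hn]; push_cast at this ⊢; simpa using this

lemma sq_one_classify_two (k : ℕ) (hk : 3 ≤ k) (u : (ZMod (2^k))ˣ)
    (h : (u : ZMod (2^k)) * u = 1) :
    (u : ZMod (2^k)) = 1 ∨ (u : ZMod (2^k)) = -1 ∨
    (u : ZMod (2^k)) = 2^(k-1) + 1 ∨ (u : ZMod (2^k)) = -(2^(k-1) + 1) := by
  have hp0 : 0 < 2^k := pow_pos two_pos k
  obtain ⟨n, hn, hcop, hdvd⟩ := unit_sq_dvd 2 k hp0 u h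
  have hnodd : Odd (n : ℤ) := by
    rcases Nat.even_or_odd n with he | ho
    · exfalso
      have h2 : (2:ℕ) ∣ n := he.two_dvd
      have : ¬ (2:ℕ) ∣ n := (Nat.Prime.coprime_iff_not_dvd Nat.prime_two).mp
        (Nat.coprime_comm.mp (hcop.coprime_dvd_right (dvd_pow_self 2 (by omega : k ≠ 0))))
      exact this h2
    · exact_mod_cast ho
  -- key fact : (2:ZMod (2^k))^k = 0 and 2^(k-1)*2 = 2^k
  have hzero : ((2:ZMod (2^k)))^k = 0 := by
    have : (((2^k : ℕ)) : ZMod (2^k)) = 0 := ZMod.natCast_self _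
    push_cast at this
    exact this
  rcases int_sq_one_two k hk n hnodd hdvd with hd | hd
  · obtain ⟨t, ht⟩ := hd
    have hcast : (u : ZMod (2^k)) = 1 + 2^(k-1) * (t : ZMod (2^k)) := by
      rw [← hn]
      have : ((n:ℤ) : ZMod (2^k)) = (((1 + 2^(k-1)*t : ℤ)) : ZMod (2^k)) := by
        congr 1; linarith [ht]
      rw [this]; push_cast; ring
    have hz : (2:ZMod (2^k))^(k-1) * 2 = 0 := by
      rw [← pow_succ, (by omega : k - 1 + 1 = k)]; exact hzero
    rcases Int.even_or_odd t with ⟨s, rfl⟩ | ⟨s, rfl⟩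
    · left
      rw [hcast]; push_cast
      linear_combination (s : ZMod (2^k)) * hz
    · right; right; left
      rw [hcast]; push_cast
      linear_combination (s : ZMod (2^k)) * hz
  · obtain ⟨t, ht⟩ := hd
    have hcast : (u : ZMod (2^k)) = -1 + 2^(k-1) * (t : ZMod (2^k)) := by
      rw [← hn]
      have : ((n:ℤ) : ZMod (2^k)) = (((-1 + 2^(k-1)*t : ℤ)) : ZMod (2^k)) := by
        congr 1; linarith [ht]
      rw [this]; push_cast; ring
    have hz : (2:ZMod (2^k))^(k-1) * 2 = 0 := by
      rw [← pow_succ, (by omega : k - 1 + 1 = k)]; exact hzero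
    rcases Int.even_or_odd t with ⟨s, rfl⟩ | ⟨s, rfl⟩
    · right; left
      rw [hcast]; push_cast
      linear_combination (s : ZMod (2^k)) * hz
    · right; right; right
      rw [hcast]; push_cast
      linear_combination ((s : ZMod (2^k)) + 1) * hz

lemma natcast_ne_zero_zmod (N d : ℕ) (h0 : 0 < d) (h1 : d < N) :
    ((d : ℕ) : ZMod N) ≠ 0 := by
  intro h
  have := (ZMod.natCast_eq_zero_iff d N).mp h
  have := Nat.le_of_dvd h0 this
  omega

lemma prod_univ_eq_prod_sq_one {G : Type*} [CommGroup G] [Fintype G] [DecidableEq G] :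
    ∏ u : G, u = ∏ u ∈ univ.filter (fun u : G => u * u = 1), u := by
  rw [← prod_filter_mul_prod_filter_not univ (fun u : G => u * u = 1) (fun u => u)]
  have : ∏ u ∈ univ.filter (fun u : G => ¬ u * u = 1), u = 1 := by
    refine prod_involution (g := fun a _ => a⁻¹) (f := fun u => u) ?_ ?_ ?_ ?_
    · intro a ha
      show a * a⁻¹ = 1
      exact mul_inv_cancel a
    · intro a ha _ hinv
      have hinv' : a⁻¹ = a := hinv
      rw [mem_filter] at ha
      exact ha.2 (by nth_rewrite 2 [← hinv']; exact mul_inv_cancel a)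
    · intro a ha
      show a⁻¹ ∈ _
      rw [mem_filter] at ha ⊢
      refine ⟨mem_univ _, fun hc => ha.2 ?_⟩
      have := congrArg (·⁻¹) hc
      simpa [mul_inv_rev] using this
    · intro a _; show a⁻¹⁻¹ = a; exact inv_inv a
  rw [this, mul_one]

lemma prod_units_eq (p k : ℕ) [NeZero (p^k)] (hp : p.Prime) (hk : 0 < k) (hpk : p^k ≠ 4) :
    ∏ u : (ZMod (p^k))ˣ, ((u : ZMod (p^k))) = (-1)^(p^k) := by
  have hcoe : ∏ u : (ZMod (p^k))ˣ, ((u : ZMod (p^k)))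
      = ((∏ u : (ZMod (p^k))ˣ, u : (ZMod (p^k))ˣ) : ZMod (p^k)) :=
    (map_prod (Units.coeHom (ZMod (p^k))) _ _).symm
  rw [hcoe, prod_univ_eq_prod_sq_one]
  by_cases hodd : p ≠ 2
  · -- odd prime : S = {1, -1}
    have hN3 : 2 < p^k := by
      have h3 : 3 ≤ p := by
        have := hp.two_le
        omega
      calc 2 < 3 := by norm_num
        _ ≤ p := h3
        _ ≤ p^k := Nat.le_self_pow hk.ne' p
    have hne : (1 : (ZMod (p^k))ˣ) ≠ -1 := by
      intro hc
      have : (1 : ZMod (p^k)) = -1 := by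
        have := congrArg (Units.val) hc; simpa using this
      have h2 : ((2:ℕ) : ZMod (p^k)) = 0 := by push_cast; linear_combination this
      exact natcast_ne_zero_zmod (p^k) 2 (by norm_num) hN3 h2
    have hset : univ.filter (fun u : (ZMod (p^k))ˣ => u * u = 1) = {1, -1} := by
      ext u
      simp only [mem_filter, mem_univ, true_and, mem_insert, mem_singleton]
      constructor
      · intro h
        have hcoe : (u : ZMod (p^k)) * u = 1 := by
          have := congrArg (Units.val) h; simpa using this
        rcases sq_one_classify_odd p k hp hodd u hcoe with h1 | h1
        · left; exact Units.ext (by simpa using h1)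
        · right; exact Units.ext (by simpa using h1)
      · rintro (rfl | rfl) <;> simp
    rw [hset, prod_insert (by simpa using hne), prod_singleton]
    have hoddN : Odd (p^k) := (hp.odd_of_ne_two hodd).pow
    rw [hoddN.neg_one_pow]
    simp
  · push_neg at hodd
    subst hodd
    rcases Nat.lt_or_ge k 2 with hk2 | hk2
    · -- k = 1
      have hk1 : k = 1 := by omega
      subst hk1
      have huniq : ∀ u : (ZMod (2^1))ˣ, u = 1 := by decide
      have hset : univ.filter (fun u : (ZMod (2^1))ˣ => u * u = 1) = {1} := by
        ext u; simp [huniq u]; exact (huniq _).symm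
      rw [hset, prod_singleton]
      norm_num
    · -- k ≥ 3
      have hk3 : 3 ≤ k := by
        rcases Nat.lt_or_ge k 3 with h | h
        · exfalso; apply hpk; have : k = 2 := by omega
          subst this; norm_num
        · exact h
      have hzero : ((2:ZMod (2^k)))^k = 0 := by
        have h0 : (((2^k : ℕ)) : ZMod (2^k)) = 0 := ZMod.natCast_self _
        push_cast at h0; exact h0
      have hz : (2:ZMod (2^k))^(k-1) * 2 = 0 := by
        rw [← pow_succ, (by omega : k - 1 + 1 = k)]; exact hzero
      have hcodd : ¬ (2:ℕ) ∣ (2^(k-1) + 1) := by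
        have : (2:ℕ) ∣ 2^(k-1) := dvd_pow_self 2 (by omega)
        omega
      have hccop : Nat.Coprime (2^(k-1)+1) (2^k) :=
        Nat.Coprime.pow_right k
          (Nat.coprime_comm.mp ((Nat.Prime.coprime_iff_not_dvd Nat.prime_two).mpr hcodd))
      have hIc : IsUnit (((2^(k-1)+1 : ℕ)) : ZMod (2^k)) := (ZMod.isUnit_iff_coprime _ _).mpr hccop
      set c : (ZMod (2^k))ˣ := hIc.unit with hcdef
      have hcval : (c : ZMod (2^k)) = 2^(k-1) + 1 := by
        rw [hcdef, IsUnit.unit_spec]; push_cast; ring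
      have hc2 : c * c = 1 := by
        have hcc : (c : ZMod (2^k)) * c = 1 := by
          rw [hcval]
          have h2 : (2:ZMod (2^k))^(k-1) * 2^(k-1) = 2^k * 2^(k-2) := by
            rw [← pow_add, ← pow_add]; congr 1; omega
          linear_combination h2 + hz + ((2:ZMod (2^k))^(k-2)) * hzero
        exact Units.ext (by rw [Units.val_mul, hcc, Units.val_one])
      -- numeric facts
      have key : ∀ d : ℕ, 0 < d → d < 2^k → ((d : ℕ) : ZMod (2^k)) ≠ 0 :=
        fun d h0 h1 => natcast_ne_zero_zmod (2^k) d h0 h1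
      have h2lt : (2:ℕ) < 2^k := by
        have : (2:ℕ)^1 < 2^k := Nat.pow_lt_pow_right (by norm_num) (by omega)
        simpa using this
      have hk1lt : (2:ℕ)^(k-1) < 2^k := Nat.pow_lt_pow_right (by norm_num) (by omega)
      have hk2lt : (2:ℕ)^(k-1) + 2 < 2^k := by
        have h4 : (4:ℕ) ≤ 2^(k-1) := by
          have : (2:ℕ)^2 ≤ 2^(k-1) := Nat.pow_le_pow_right (by norm_num) (by omega)
          simpa using this
        have hkk : (2:ℕ)^k = 2^(k-1) * 2 := by rw [← pow_succ]; congr 1; omega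
        omega
      have hk1pos : 0 < (2:ℕ)^(k-1) := Nat.pow_pos (by norm_num)
      -- ZMod-level inequalities
      have zi : (1 : ZMod (2^k)) ≠ -1 := by
        intro h; exact key 2 (by norm_num) h2lt (by push_cast; linear_combination h)
      have zii : (1 : ZMod (2^k)) ≠ 2^(k-1) + 1 := by
        intro h; exact key (2^(k-1)) hk1pos hk1lt (by push_cast; linear_combination -h)
      have ziii : (1 : ZMod (2^k)) ≠ -(2^(k-1) + 1) := by
        intro h; exact key (2^(k-1) + 2) (by omega) hk2lt (by push_cast; linear_combination h)
      have ziv : (-1 : ZMod (2^k)) ≠ 2^(k-1) + 1 := by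
        intro h; exact key (2^(k-1) + 2) (by omega) hk2lt (by push_cast; linear_combination -h)
      have zv : (-1 : ZMod (2^k)) ≠ -(2^(k-1) + 1) := by
        intro h; exact key (2^(k-1)) hk1pos hk1lt (by push_cast; linear_combination h)
      have zvi : ((2^(k-1) + 1 : ZMod (2^k))) ≠ -(2^(k-1) + 1) := by
        intro h; exact key 2 (by norm_num) h2lt (by push_cast; linear_combination h - hz)
      -- unit-level inequalities
      have ne12 : (1 : (ZMod (2^k))ˣ) ≠ -1 := by
        intro h; exact zi (by simpa using congrArg Units.val h)
      have ne13 : (1 : (ZMod (2^k))ˣ) ≠ c := by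
        intro h; exact zii (by simpa [hcval] using congrArg Units.val h)
      have ne14 : (1 : (ZMod (2^k))ˣ) ≠ -c := by
        intro h; exact ziii (by simpa [hcval] using congrArg Units.val h)
      have ne23 : (-1 : (ZMod (2^k))ˣ) ≠ c := by
        intro h; exact ziv (by simpa [hcval] using congrArg Units.val h)
      have ne24 : (-1 : (ZMod (2^k))ˣ) ≠ -c := by
        intro h; exact zv (by simpa [hcval] using congrArg Units.val h)
      have ne34 : c ≠ -c := by
        intro h; exact zvi (by simpa [hcval] using congrArg Units.val h)
      have hset : univ.filter (fun u : (ZMod (2^k))ˣ => u * u = 1) = {1, -1, c, -c} := by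
        ext u
        simp only [mem_filter, mem_univ, true_and, mem_insert, mem_singleton]
        constructor
        · intro h
          have hcoe2 : (u : ZMod (2^k)) * u = 1 := by
            have := congrArg Units.val h; simpa using this
          rcases sq_one_classify_two k hk3 u hcoe2 with h1 | h1 | h1 | h1
          · exact Or.inl (Units.ext (by simpa using h1))
          · exact Or.inr (Or.inl (Units.ext (by simpa using h1)))
          · exact Or.inr (Or.inr (Or.inl (Units.ext (by rw [hcval]; simpa using h1))))
          · exact Or.inr (Or.inr (Or.inr (Units.ext (by rw [Units.val_neg, hcval]; simpa using h1))))
        · rintro (rfl | rfl | rfl | rfl)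
          · simp
          · simp
          · exact hc2
          · simpa [neg_mul_neg] using hc2
      rw [hset]
      rw [prod_insert (by simp [ne12, ne13, ne14]), prod_insert (by simp [ne23, ne24]),
        prod_insert (by simp [ne34]), prod_singleton]
      have hfin : (1 : (ZMod (2^k))ˣ) * (-1 * (c * -c)) = 1 := by
        rw [mul_neg, hc2]; simp
      rw [hfin]
      have hevN : Even ((2:ℕ)^k) := (Nat.even_pow).mpr ⟨even_two, by omega⟩
      rw [hevN.neg_one_pow]
      simp

lemma interval_prod (p k : ℕ) [NeZero (p^k)] (hp : p.Prime) (hk : 0 < k) (x : ℕ) :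
    ∏ t ∈ (Finset.Ico x (x + p^k)).filter (fun t => Nat.Coprime t p), ((t : ℕ) : ZMod (p^k))
      = ∏ u : (ZMod (p^k))ˣ, (u : ZMod (p^k)) := by
  have hNpos : 0 < p^k := Nat.pos_of_ne_zero (NeZero.ne _)
  -- second step : units product = product over unit elements
  have hstep2 : ∏ u : (ZMod (p^k))ˣ, (u : ZMod (p^k))
      = ∏ v ∈ univ.filter (fun v : ZMod (p^k) => IsUnit v), v := by
    refine prod_bij (fun u _ => (u : ZMod (p^k))) ?_ ?_ ?_ ?_
    · intro u _; exact mem_filter.mpr ⟨mem_univ _, u.isUnit⟩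
    · intro a _ b _ h; exact Units.ext h
    · intro b hb
      exact ⟨(mem_filter.mp hb).2.unit, mem_univ _, (mem_filter.mp hb).2.unit_spec⟩
    · intro u _; rfl
  rw [hstep2]
  refine prod_nbij' (fun t => ((t : ℕ) : ZMod (p^k)))
    (fun v => x + (ZMod.val (v - (x : ZMod (p^k))))) ?_ ?_ ?_ ?_ ?_
  · intro t ht
    rw [mem_filter] at ht ⊢
    exact ⟨mem_univ _, (ZMod.isUnit_iff_coprime t (p^k)).mpr (ht.2.pow_right k)⟩
  · intro v hv
    rw [mem_filter] at hv ⊢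
    constructor
    · rw [mem_Ico]
      constructor
      · exact Nat.le_add_right _ _
      · show x + ZMod.val (v - (x : ZMod (p^k))) < x + p^k
        have := ZMod.val_lt (v - (x : ZMod (p^k)))
        omega
    · -- coprimality
      have hcast : ((x + ZMod.val (v - (x : ZMod (p^k))) : ℕ) : ZMod (p^k)) = v := by
        push_cast
        rw [ZMod.natCast_val, ZMod.cast_id]
        ring
      have : IsUnit ((((x + ZMod.val (v - (x : ZMod (p^k)))) : ℕ)) : ZMod (p^k)) := by
        rw [hcast]; exact hv.2
      have hcop := (ZMod.isUnit_iff_coprime _ (p^k)).mp this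
      exact hcop.coprime_dvd_right (dvd_pow_self p hk.ne')
  · intro t ht
    rw [mem_filter, mem_Ico] at ht
    obtain ⟨⟨hx1, hx2⟩, -⟩ := ht
    have h1 : ((t : ℕ) : ZMod (p^k)) - (x : ZMod (p^k)) = ((t - x : ℕ) : ZMod (p^k)) := by
      rw [Nat.cast_sub hx1]
    show x + ZMod.val (((t : ℕ) : ZMod (p^k)) - (x : ZMod (p^k))) = t
    rw [h1, ZMod.val_cast_of_lt (by omega : t - x < p^k)]
    omega
  · intro v hv
    push_cast
    rw [ZMod.natCast_val, ZMod.cast_id]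
    ring
  · intro t _; rfl

lemma gamma_shift (p k : ℕ) [NeZero (p^k)] (hp : p.Prime) (hk : 0 < k) (hpk : p^k ≠ 4) (x : ℕ) :
    ((padicGammaNat p (x + p^k) : ℤ) : ZMod (p^k)) = ((padicGammaNat p x : ℤ) : ZMod (p^k)) := by
  unfold padicGammaNat
  have hsplit : (range (x + p^k)).filter (fun t => Nat.Coprime t p)
      = ((range x).filter (fun t => Nat.Coprime t p))
        ∪ ((Ico x (x + p^k)).filter (fun t => Nat.Coprime t p)) := by
    simp only [range_eq_Ico]
    rw [← filter_union, Ico_union_Ico_eq_Ico (Nat.zero_le x) (Nat.le_add_right _ _)]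
  have hprod : ∏ t ∈ (range (x + p^k)).filter (fun t => Nat.Coprime t p), (t : ℤ)
      = (∏ t ∈ (range x).filter (fun t => Nat.Coprime t p), (t : ℤ))
        * ∏ t ∈ (Ico x (x + p^k)).filter (fun t => Nat.Coprime t p), (t : ℤ) := by
    rw [hsplit]
    refine prod_union ?_
    rw [range_eq_Ico]
    exact disjoint_filter_filter (Ico_disjoint_Ico_consecutive 0 x (x + p^k))
  rw [hprod]
  push_cast
  rw [interval_prod p k hp hk x, prod_units_eq p k hp hk hpk]
  have hone : ((-1 : ZMod (p^k)))^(p^k) * (-1)^(p^k) = 1 := by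
    rw [← pow_add, ← two_mul, pow_mul, neg_one_sq, one_pow]
  rw [pow_add]
  linear_combination ((-1 : ZMod (p^k))^x *
    ∏ t ∈ (range x).filter (fun t => Nat.Coprime t p), ((t : ℕ) : ZMod (p^k))) * hone

lemma gamma_add_mul (p k : ℕ) [NeZero (p^k)] (hp : p.Prime) (hk : 0 < k) (hpk : p^k ≠ 4)
    (a m : ℕ) :
    ((padicGammaNat p (a + p^k * m) : ℤ) : ZMod (p^k)) = ((padicGammaNat p a : ℤ) : ZMod (p^k)) := by
  induction m with
  | zero => simp
  | succ m ih =>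
    have hstep : a + p^k * (m+1) = (a + p^k * m) + p^k := by ring
    rw [hstep, gamma_shift p k hp hk hpk, ih]

lemma gamma_mod_le (p k : ℕ) [NeZero (p^k)] (hp : p.Prime) (hk : 0 < k) (hpk : p^k ≠ 4)
    (a b : ℕ) (hle : a ≤ b) (hab : a ≡ b [MOD p^k]) :
    ((padicGammaNat p b : ℤ) : ZMod (p^k)) = ((padicGammaNat p a : ℤ) : ZMod (p^k)) := by
  obtain ⟨m, hm⟩ := (Nat.modEq_iff_dvd' hle).mp hab
  have hb : b = a + p^k * m := by omega
  rw [hb]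
  exact gamma_add_mul p k hp hk hpk a m

/-- Generalised Wilson's theorem: if `x ≡ y (mod p^k)` and `p^k ≠ 4`
then `Γ_p(x) ≡ Γ_p(y) (mod p^k)`. -/
theorem padic_gamma_generalised_wilson (p : ℕ) (hp : p.Prime) (k : ℕ) (hk : 0 < k)
    (hpk : p ^ k ≠ 4) (x y : ℕ) (hxy : (x : ℤ) ≡ (y : ℤ) [ZMOD ((p : ℤ) ^ k)]) :
    padicGammaNat p x ≡ padicGammaNat p y [ZMOD ((p : ℤ) ^ k)] := by
  haveI : NeZero (p^k) := ⟨(pow_pos hp.pos k).ne'⟩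
  have hmod : ((p:ℤ))^k = ((p^k : ℕ) : ℤ) := by push_cast; ring
  rw [hmod] at hxy ⊢
  rw [← ZMod.intCast_eq_intCast_iff] at hxy ⊢
  have hnat : x ≡ y [MOD p^k] := by
    rw [← ZMod.natCast_eq_natCast_iff]
    push_cast at hxy
    exact_mod_cast hxy
  rcases le_total x y with hle | hle
  · exact (gamma_mod_le p k hp hk hpk x y hle hnat).symm
  · exact gamma_mod_le p k hp hk hpk y x hle hnat.symm
end

section
/- For n ≥ 3 and an integer i with 1 ≤ i ≤ n-1, the 3-adic gamma function satisfies Γ_3(⟨3^i/(3^n - 1)⟩) ≡ 13 (mod 27) if i = 1, and Γ_3(⟨3^i/(3^n - 1)⟩) ≡ 1 (mod 27) if i > 1, where the argument is the element of ℤ_3 given by the fractional part 3^i/(3^n - 1) ∈ ℤ_3. -/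
open Finset

lemma padicGammaNat_succ (p k : ℕ) :
    padicGammaNat p (k + 1) =
      -(padicGammaNat p k) * (if Nat.Coprime k p then (k : ℤ) else 1) := by
  unfold padicGammaNat
  rw [range_add_one, filter_insert]
  by_cases h : Nat.Coprime k p
  · rw [if_pos h, if_pos h, prod_insert (by simp)]
    ring
  · rw [if_neg h, if_neg h]
    ring

/-- Γ₃ mod 27 as a function of ℕ. -/
def F3 (a : ℕ) : ZMod 27 := ((padicGammaNat 3 a : ℤ) : ZMod 27)

lemma F3_succ (a : ℕ) :
    F3 (a + 1) = -(F3 a) * (if Nat.Coprime a 3 then (a : ZMod 27) else 1) := by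
  unfold F3
  rw [padicGammaNat_succ]
  push_cast
  by_cases h : Nat.Coprime a 3 <;> simp [h]

lemma coprime_add_27 (a : ℕ) : Nat.Coprime (a + 27) 3 ↔ Nat.Coprime a 3 := by
  have h : a + 27 = a + 9 * 3 := by ring
  rw [h]
  exact Nat.coprime_add_mul_right_left a 3 9

lemma F3_period (a : ℕ) : F3 (a + 27) = F3 a := by
  induction a with
  | zero => decide +kernel
  | succ a ih =>
    have h1 : a + 1 + 27 = (a + 27) + 1 := by ring
    rw [h1, F3_succ, ih, F3_succ]
    have h2 : ((a + 27 : ℕ) : ZMod 27) = (a : ZMod 27) := by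
      push_cast
      have h3 : (27 : ZMod 27) = 0 := by decide
      rw [h3, add_zero]
    by_cases h : Nat.Coprime a 3 <;>
      simp [h, coprime_add_27, h2]

lemma F3_mod (a : ℕ) : F3 a = F3 (a % 27) := by
  conv_lhs => rw [← Nat.mod_add_div a 27]
  generalize a / 27 = q
  induction q with
  | zero => simp
  | succ q ih =>
    have h : a % 27 + 27 * (q + 1) = (a % 27 + 27 * q) + 27 := by ring
    rw [h, F3_period, ih]

lemma F3_eq_of_cast_eq {a r : ℕ} (hr : r < 27) (h : (a : ZMod 27) = (r : ZMod 27)) :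
    F3 a = F3 r := by
  rw [F3_mod a, F3_mod r, Nat.mod_eq_of_lt hr]
  congr 1
  have := (ZMod.natCast_eq_natCast_iff a r 27).mp h
  simpa [Nat.ModEq, Nat.mod_eq_of_lt hr] using this

/-- Divisibility by 27 transfers from `ℤ_[3]` congruence to casts in `ZMod 27`. -/
lemma natCast_zmod_eq_of_dvd (a r : ℕ) (h : (27 : ℤ_[3]) ∣ (a : ℤ_[3]) - (r : ℤ_[3])) :
    (a : ZMod 27) = (r : ZMod 27) := by
  have hmem : (a : ℤ_[3]) - (r : ℤ_[3]) ∈ (Ideal.span {((3 : ℕ) : ℤ_[3]) ^ 3} : Ideal ℤ_[3]) := by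
    rw [Ideal.mem_span_singleton]
    obtain ⟨c, hc⟩ := h
    exact ⟨c, by rw [hc]; push_cast; ring⟩
  have hker : (PadicInt.toZModPow (p := 3) 3) ((a : ℤ_[3]) - (r : ℤ_[3])) = 0 := by
    rw [← RingHom.mem_ker, PadicInt.ker_toZModPow]
    exact hmem
  rw [map_sub, map_natCast, map_natCast, sub_eq_zero] at hker
  have key : a ≡ r [MOD 3 ^ 3] := (ZMod.natCast_eq_natCast_iff a r (3 ^ 3)).mp hker
  have h33 : (3 : ℕ) ^ 3 = 27 := by norm_num
  rw [h33] at key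
  exact (ZMod.natCast_eq_natCast_iff a r 27).mpr key

lemma dvd_padic_of_F3 (a : ℕ) (c : ℤ) (h : F3 a = (c : ZMod 27)) :
    (27 : ℤ_[3]) ∣ ((padicGammaNat 3 a : ℤ) : ℤ_[3]) - (c : ℤ_[3]) := by
  have h0 : ((padicGammaNat 3 a - c : ℤ) : ZMod 27) = 0 := by
    push_cast
    rw [show ((padicGammaNat 3 a : ℤ) : ZMod 27) = F3 a from rfl, h]
    ring
  have hdvd : (27 : ℤ) ∣ padicGammaNat 3 a - c :=
    (ZMod.intCast_zmod_eq_zero_iff_dvd _ 27).mp h0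
  obtain ⟨k, hk⟩ := hdvd
  refine ⟨(k : ℤ_[3]), ?_⟩
  have h1 := congrArg (fun z : ℤ => (z : ℤ_[3])) hk
  push_cast at h1 ⊢
  linear_combination h1

/-- For `n ≥ 3` and `1 ≤ i ≤ n-1`, the 3-adic gamma function (the continuous
extension `G` of `padicGammaNat 3` to `ℤ_3`) satisfies
`Γ_3(⟨3^i/(3^n-1)⟩) ≡ 13 (mod 27)` if `i = 1` and `≡ 1 (mod 27)` if `i > 1`.
Here `⟨3^i/(3^n-1)⟩ = 3^i/(3^n-1)` is the element `x` of `ℤ_3` with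
`(3^n - 1) x = 3^i`. -/
theorem padic_gamma_fractional_values (G : ℤ_[3] → ℤ_[3]) (hG : Continuous G)
    (hGnat : ∀ k : ℕ, G (k : ℤ_[3]) = ((padicGammaNat 3 k : ℤ) : ℤ_[3]))
    (n : ℕ) (hn : 3 ≤ n) (i : ℕ) (hi1 : 1 ≤ i) (hi2 : i ≤ n - 1)
    (x : ℤ_[3]) (hx : ((3 : ℤ_[3]) ^ n - 1) * x = 3 ^ i) :
    (i = 1 → (27 : ℤ_[3]) ∣ G x - 13) ∧ (1 < i → (27 : ℤ_[3]) ∣ G x - 1) := by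
  set r : ℕ := if i = 1 then 24 else if i = 2 then 18 else 0 with hr_def
  set c : ℤ := if i = 1 then 13 else 1 with hc_def
  have hr27 : r < 27 := by rw [hr_def]; split_ifs <;> norm_num
  -- 27 ∣ x + 3^i
  have h3n : (27 : ℤ_[3]) ∣ (3 : ℤ_[3]) ^ n := by
    have h : (27 : ℤ_[3]) = 3 ^ 3 := by norm_num
    rw [h]
    exact pow_dvd_pow 3 hn
  have hx3 : (27 : ℤ_[3]) ∣ x + 3 ^ i := by
    have h : x + 3 ^ i = (3 : ℤ_[3]) ^ n * x := by
      rw [← hx]; ring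
    rw [h]
    exact h3n.mul_right x
  -- 27 ∣ r + 3^i
  have hr3 : (27 : ℤ_[3]) ∣ (r : ℤ_[3]) + 3 ^ i := by
    by_cases hI : i = 1
    · subst hI
      have hr : r = 24 := by simp [hr_def]
      rw [hr]
      push_cast
      norm_num
    · by_cases hI2 : i = 2
      · subst hI2
        have hr : r = 18 := by simp [hr_def]
        rw [hr]
        push_cast
        norm_num
      · have hr : r = 0 := by simp [hr_def, hI, hI2]
        rw [hr]
        push_cast
        rw [zero_add]
        have h27 : (27 : ℤ_[3]) = 3 ^ 3 := by norm_num
        rw [h27]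
        exact pow_dvd_pow 3 (by omega)
  -- 27 ∣ x - r
  have hxr : (27 : ℤ_[3]) ∣ x - (r : ℤ_[3]) := by
    have h : x - (r : ℤ_[3]) = (x + 3 ^ i) - ((r : ℤ_[3]) + 3 ^ i) := by ring
    rw [h]
    exact hx3.sub hr3
  -- value of F3 at r
  have hF3r : F3 r = (c : ZMod 27) := by
    rw [hr_def, hc_def]
    split_ifs <;> decide +kernel
  -- key: for any nat a with (a:ℤ_3) ≡ x mod 27, the gamma value is ≡ c
  have key : ∀ a : ℕ, (27 : ℤ_[3]) ∣ (a : ℤ_[3]) - x →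
      (27 : ℤ_[3]) ∣ ((padicGammaNat 3 a : ℤ) : ℤ_[3]) - (c : ℤ_[3]) := by
    intro a ha
    apply dvd_padic_of_F3
    have har : (27 : ℤ_[3]) ∣ (a : ℤ_[3]) - (r : ℤ_[3]) := by
      have h : (a : ℤ_[3]) - (r : ℤ_[3]) = ((a : ℤ_[3]) - x) + (x - (r : ℤ_[3])) := by ring
      rw [h]; exact ha.add hxr
    rw [F3_eq_of_cast_eq hr27 (natCast_zmod_eq_of_dvd a r har)]
    exact hF3r
  -- continuity: find a nat a close to x and conclude
  have main : (27 : ℤ_[3]) ∣ G x - (c : ℤ_[3]) := by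
    have hcont := (Metric.continuousAt_iff).mp (hG.continuousAt (x := x))
    obtain ⟨δ, hδ, hδ'⟩ := hcont (((3 : ℕ) : ℝ) ^ (-((3 : ℕ) : ℤ))) (by positivity)
    obtain ⟨k, hk⟩ := exists_pow_lt_of_lt_one hδ (by norm_num : (1/3 : ℝ) < 1)
    set m := k + 3 with hm
    set a := x.appr m with ha_def
    have hspec := PadicInt.appr_spec m x
    rw [Ideal.mem_span_singleton] at hspec
    have h27a : (27 : ℤ_[3]) ∣ (a : ℤ_[3]) - x := by
      have h1 : (27 : ℤ_[3]) ∣ x - (a : ℤ_[3]) := by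
        have h2 : (27 : ℤ_[3]) = 3 ^ 3 := by norm_num
        have h3 : ((3 : ℕ) : ℤ_[3]) = (3 : ℤ_[3]) := by push_cast; ring
        rw [h2]
        refine dvd_trans (pow_dvd_pow 3 (by omega : 3 ≤ m)) ?_
        rw [← h3]
        exact hspec
      have := dvd_neg.mpr h1
      rwa [neg_sub] at this
    have hdist : dist ((a : ℤ_[3])) x < δ := by
      rw [dist_eq_norm]
      have hn1 : ‖(a : ℤ_[3]) - x‖ ≤ ((3 : ℕ) : ℝ) ^ (-(m : ℤ)) := by
        rw [PadicInt.norm_le_pow_iff_mem_span_pow, Ideal.mem_span_singleton]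
        have h := dvd_neg.mpr hspec
        rwa [neg_sub] at h
      calc ‖(a : ℤ_[3]) - x‖ ≤ ((3 : ℕ) : ℝ) ^ (-(m : ℤ)) := hn1
        _ = (1/3 : ℝ) ^ m := by
            rw [zpow_neg, zpow_natCast, one_div, inv_pow]
            norm_num
        _ ≤ (1/3 : ℝ) ^ k := by
            apply pow_le_pow_of_le_one (by norm_num) (by norm_num)
            omega
        _ < δ := hk
    have hGa := hδ' hdist
    have hGdvd : (27 : ℤ_[3]) ∣ G (a : ℤ_[3]) - G x := by
      have hle : ‖G (a : ℤ_[3]) - G x‖ ≤ ((3 : ℕ) : ℝ) ^ (-((3 : ℕ) : ℤ)) := by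
        rw [← dist_eq_norm]
        exact le_of_lt hGa
      rw [PadicInt.norm_le_pow_iff_mem_span_pow, Ideal.mem_span_singleton] at hle
      have h27 : (27 : ℤ_[3]) = ((3 : ℕ) : ℤ_[3]) ^ 3 := by push_cast; norm_num
      rw [h27]
      exact hle
    have hgamma := key a h27a
    rw [hGnat a] at hGdvd
    have h : G x - (c : ℤ_[3]) =
        (((padicGammaNat 3 a : ℤ) : ℤ_[3]) - (c : ℤ_[3]))
          - (((padicGammaNat 3 a : ℤ) : ℤ_[3]) - G x) := by
      ring
    rw [h]
    exact hgamma.sub hGdvd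
  constructor
  · intro h1
    have hc : c = 13 := by rw [hc_def, if_pos h1]
    rw [hc] at main
    simpa using main
  · intro h1
    have hc : c = 1 := by rw [hc_def, if_neg (by omega)]
    rw [hc] at main
    simpa using main
end

section
/- For q = p^n and a ∈ F_q, the Kloosterman sum satisfies K_q(a) ≡ -Σ_{j=1}^{q-2} g(j)² ω^j(a) (mod q) in the ring of integers of ℚ_p(ξ,ζ). -/
open Finset

/-- The Kloosterman sum `K_q(a) = Σ_{x ∈ F_q} ζ^{Tr(x⁻¹ + a x)}` (with `0⁻¹ = 0`),
with values in a ring `R` containing the primitive `p`-th root of unity `ζ`. -/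
noncomputable def KloostermanR (p : ℕ) (F R : Type) [Field F] [Fintype F]
    [Algebra (ZMod p) F] [CommRing R] (ζ : R) (a : F) : R :=
  ∑ x : F, ζ ^ (Algebra.trace (ZMod p) F (x⁻¹ + a * x)).val

/-- The Gauss sum `g(j) = τ(ω^{-j}) = -Σ_{x ∈ F_q} ω^{-j}(x) ζ^{Tr(x)}`,
where `ω` is the Teichmüller character; for `1 ≤ j ≤ q-2` one has
`ω^{-j}(x) = ω(x)^{q-1-j}` (and `ω(0) = 0`). -/
noncomputable def gaussG (p : ℕ) (F R : Type) [Field F] [Fintype F]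
    [Algebra (ZMod p) F] [CommRing R] (ζ : R) (ω : F →*₀ R) (j : ℕ) : R :=
  -∑ x : F, ω x ^ (Fintype.card F - 1 - j) * ζ ^ (Algebra.trace (ZMod p) F x).val




section Aux
variable {p : ℕ} {F R : Type} [Field F] [Fintype F] [Algebra (ZMod p) F]
  [CommRing R] [IsDomain R]

lemma zeta_pow_mod {ζ : R} (hζ : IsPrimitiveRoot ζ p) (m : ℕ) :
    ζ ^ (m % p) = ζ ^ m := by
  conv_rhs => rw [← Nat.mod_add_div m p]
  rw [pow_add, pow_mul, hζ.pow_eq_one, one_pow, mul_one]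

lemma mu_add (hp : p.Prime) {ζ : R} (hζ : IsPrimitiveRoot ζ p) (x y : F) :
    ζ ^ (Algebra.trace (ZMod p) F (x + y)).val
      = ζ ^ (Algebra.trace (ZMod p) F x).val * ζ ^ (Algebra.trace (ZMod p) F y).val := by
  haveI : NeZero p := ⟨hp.ne_zero⟩
  rw [map_add, ZMod.val_add, zeta_pow_mod hζ, pow_add]

lemma sum_mu (hp : p.Prime) {ζ : R} (hζ : IsPrimitiveRoot ζ p) :
    ∑ x : F, ζ ^ (Algebra.trace (ZMod p) F x).val = 0 := by
  haveI : Fact p.Prime := ⟨hp⟩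
  haveI : FiniteDimensional (ZMod p) F := Module.Finite.of_finite
  obtain ⟨e, he⟩ := Algebra.trace_surjective (ZMod p) F 1
  have hμe : ζ ^ (Algebra.trace (ZMod p) F e).val ≠ 1 := by
    rw [he, ZMod.val_one_eq_one_mod, zeta_pow_mod hζ, pow_one]
    exact hζ.ne_one hp.one_lt
  have hshift : ∑ x : F, ζ ^ (Algebra.trace (ZMod p) F (x + e)).val
      = ∑ x : F, ζ ^ (Algebra.trace (ZMod p) F x).val :=
    Equiv.sum_comp (Equiv.addRight e) (fun x => ζ ^ (Algebra.trace (ZMod p) F x).val)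
  have heq : (∑ x : F, ζ ^ (Algebra.trace (ZMod p) F x).val)
      = (∑ x : F, ζ ^ (Algebra.trace (ZMod p) F x).val)
        * ζ ^ (Algebra.trace (ZMod p) F e).val := by
    conv_lhs => rw [← hshift]
    rw [Finset.sum_mul]
    exact Finset.sum_congr rfl fun x _ => mu_add hp hζ x e
  have h0 : (∑ x : F, ζ ^ (Algebra.trace (ZMod p) F x).val)
      * (ζ ^ (Algebra.trace (ZMod p) F e).val - 1) = 0 := by
    rw [mul_sub, mul_one, ← heq, sub_self]
  rcases mul_eq_zero.mp h0 with h | h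
  · exact h
  · exact absurd (sub_eq_zero.mp h) hμe

lemma ortho [DecidableEq F] (ω : F →*₀ R) (ρ : R →+* F) (hρω : ∀ x : F, ρ (ω x) = x)
    {a : F} (ha : a ≠ 0) (v : F) :
    ∑ j ∈ range (Fintype.card F - 1), ω v ^ (Fintype.card F - 1 - j) * ω a ^ j
      = if v = a then ((Fintype.card F - 1 : ℕ) : R) else 0 := by
  set m := Fintype.card F - 1 with hm
  have hm0 : 0 < m := Nat.sub_pos_of_lt Fintype.one_lt_card
  by_cases hv : v = a
  · subst hv
    rw [if_pos rfl]
    have h1 : ∀ j ∈ range m, ω v ^ (m - j) * ω v ^ j = 1 := by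
      intro j hj
      rw [← pow_add, Nat.sub_add_cancel (le_of_lt (mem_range.mp hj)),
        ← map_pow, hm, FiniteField.pow_card_sub_one_eq_one v ha, map_one]
    rw [Finset.sum_congr rfl h1, Finset.sum_const, card_range, nsmul_eq_mul, mul_one]
  · rw [if_neg hv]
    by_cases hv0 : v = 0
    · subst hv0
      refine Finset.sum_eq_zero fun j hj => ?_
      rw [map_zero, zero_pow (Nat.sub_ne_zero_of_lt (mem_range.mp hj)), zero_mul]
    · have hne : ω a - ω v ≠ 0 := by
        rw [sub_ne_zero]
        intro h
        exact hv ((hρω v) ▸ (hρω a) ▸ congrArg ρ h).symm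
      have hva : ω v ^ m = 1 := by
        rw [← map_pow, hm, FiniteField.pow_card_sub_one_eq_one v hv0, map_one]
      have haa : ω a ^ m = 1 := by
        rw [← map_pow, hm, FiniteField.pow_card_sub_one_eq_one a ha, map_one]
      have key : (∑ j ∈ range m, ω v ^ (m - j) * ω a ^ j) * (ω a - ω v) = 0 := by
        have h2 : ∀ j ∈ range m, ω v ^ (m - j) * ω a ^ j
            = ω v * (ω a ^ j * ω v ^ (m - 1 - j)) := by
          intro j hj
          have : m - j = (m - 1 - j) + 1 := by
            have := mem_range.mp hj; omega
          rw [this, pow_succ]; ring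
        rw [Finset.sum_congr rfl h2, ← Finset.mul_sum, mul_assoc,
          geom_sum₂_mul, haa, hva, sub_self, mul_zero]
      rcases mul_eq_zero.mp key with h | h
      · exact h
      · exact absurd h hne

end Aux

/-- `K_q(a) ≡ -Σ_{j=1}^{q-2} g(j)² ω^j(a)  (mod q)` in the ring of integers of
`ℚ_p(ξ,ζ)`, modelled by the local ring `R` with residue map `ρ` onto `F_q`
and Teichmüller character `ω` (pinned down by `ρ ∘ ω = id`). -/
theorem kloosterman_fourier_congruence (p n : ℕ) (hp : p.Prime) (hodd : Odd p)
    (hn : 0 < n) (F : Type) [Field F] [Fintype F] [Algebra (ZMod p) F]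
    (hF : Fintype.card F = p ^ n)
    (R : Type) [CommRing R] [IsDomain R]
    (ζ : R) (hζ : IsPrimitiveRoot ζ p)
    (ω : F →*₀ R) (ρ : R →+* F) (hρω : ∀ x : F, ρ (ω x) = x)
    (hlocal : ∀ x : R, ρ x ≠ 0 → IsUnit x)
    (a : F) :
    ((p ^ n : ℕ) : R) ∣
      KloostermanR p F R ζ a +
        ∑ j ∈ Icc 1 (p ^ n - 2), (gaussG p F R ζ ω j) ^ 2 * (ω a) ^ j := by
  classical
  rw [← hF]
  have hc2 : 2 ≤ Fintype.card F := Fintype.one_lt_card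
  by_cases ha : a = 0
  · subst ha
    have hK : KloostermanR p F R ζ 0 = 0 := by
      unfold KloostermanR
      calc ∑ x : F, ζ ^ (Algebra.trace (ZMod p) F (x⁻¹ + 0 * x)).val
          = ∑ x : F, ζ ^ (Algebra.trace (ZMod p) F x⁻¹).val := by
            refine Finset.sum_congr rfl fun x _ => ?_
            rw [zero_mul, add_zero]
        _ = ∑ x : F, ζ ^ (Algebra.trace (ZMod p) F x).val :=
            Equiv.sum_comp (Equiv.inv F) (fun x => ζ ^ (Algebra.trace (ZMod p) F x).val)
        _ = 0 := sum_mu hp hζ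
    have hz : ∀ j ∈ Icc 1 (Fintype.card F - 2), gaussG p F R ζ ω j ^ 2 * ω 0 ^ j = 0 := by
      intro j hj
      have hj1 : 1 ≤ j := (mem_Icc.mp hj).1
      rw [map_zero, zero_pow (by omega), mul_zero]
    rw [hK, Finset.sum_eq_zero hz, add_zero]
    exact dvd_zero _
  · -- main case
    set m := Fintype.card F - 1 with hmdef
    have hm0 : 0 < m := by omega
    -- Step A : Kloosterman sum rewritten
    have hK : KloostermanR p F R ζ a
        = 1 + ∑ x ∈ univ.erase (0:F), ζ ^ (Algebra.trace (ZMod p) F (x + a * x⁻¹)).val := by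
      unfold KloostermanR
      have h1 : ∑ x : F, ζ ^ (Algebra.trace (ZMod p) F (x⁻¹ + a * x)).val
          = ∑ x : F, ζ ^ (Algebra.trace (ZMod p) F (x + a * x⁻¹)).val := by
        rw [← Equiv.sum_comp (Equiv.inv F)
          (fun x => ζ ^ (Algebra.trace (ZMod p) F (x⁻¹ + a * x)).val)]
        refine Finset.sum_congr rfl fun x _ => ?_
        simp only [Equiv.inv_apply, inv_inv]
      rw [h1, ← Finset.add_sum_erase univ _ (mem_univ (0:F))]
      congr 1
      rw [inv_zero, mul_zero, add_zero, map_zero, ZMod.val_zero, pow_zero]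
    -- Step C : g(0) = 1
    have hg0 : gaussG p F R ζ ω 0 = 1 := by
      have h1 : ∀ x ∈ univ.erase (0:F),
          ω x ^ m * ζ ^ (Algebra.trace (ZMod p) F x).val
            = ζ ^ (Algebra.trace (ZMod p) F x).val := by
        intro x hx
        rw [hmdef, ← map_pow, FiniteField.pow_card_sub_one_eq_one x (mem_erase.mp hx).1,
          map_one, one_mul]
      have hsum : ∑ x : F, ω x ^ m * ζ ^ (Algebra.trace (ZMod p) F x).val = -1 := by
        rw [← Finset.add_sum_erase univ
          (fun x => ω x ^ m * ζ ^ (Algebra.trace (ZMod p) F x).val) (mem_univ (0:F))]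
        rw [map_zero, zero_pow (by omega : m ≠ 0), zero_mul, zero_add,
          Finset.sum_congr rfl h1, Finset.sum_erase_eq_sub (mem_univ (0:F)),
          sum_mu hp hζ, map_zero, ZMod.val_zero, pow_zero, zero_sub]
      simp only [gaussG, Nat.sub_zero, ← hmdef]
      rw [hsum]
      exact neg_neg 1
    -- Step B : the full Fourier sum
    have hT : ∑ j ∈ range m, gaussG p F R ζ ω j ^ 2 * ω a ^ j
        = ((m : ℕ) : R) * ∑ x ∈ univ.erase (0:F),
            ζ ^ (Algebra.trace (ZMod p) F (x + a * x⁻¹)).val := by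
      have e1 : ∀ j, gaussG p F R ζ ω j ^ 2 * ω a ^ j
          = ∑ x : F, ∑ y : F,
              (ζ ^ (Algebra.trace (ZMod p) F x).val * ζ ^ (Algebra.trace (ZMod p) F y).val)
                * (ω (x * y) ^ (m - j) * ω a ^ j) := by
        intro j
        simp only [gaussG, ← hmdef, neg_sq]
        rw [pow_two, Finset.sum_mul_sum, Finset.sum_mul]
        refine Finset.sum_congr rfl fun x _ => ?_
        rw [Finset.sum_mul]
        refine Finset.sum_congr rfl fun y _ => ?_
        rw [map_mul, mul_pow]
        ring
      have e2 : ∀ x : F,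
          (∑ y : F, (ζ ^ (Algebra.trace (ZMod p) F x).val * ζ ^ (Algebra.trace (ZMod p) F y).val)
              * (if x * y = a then ((m : ℕ) : R) else 0))
          = if x = 0 then 0
            else ζ ^ (Algebra.trace (ZMod p) F (x + a * x⁻¹)).val * ((m : ℕ) : R) := by
        intro x
        by_cases hx : x = 0
        · rw [if_pos hx]
          refine Finset.sum_eq_zero fun y _ => ?_
          rw [hx, zero_mul, if_neg (fun h => ha h.symm), mul_zero]
        · rw [if_neg hx]
          have hcond : ∀ y : F, (x * y = a) = (y = x⁻¹ * a) := by
            intro y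
            apply propext
            constructor
            · intro h; rw [← h, inv_mul_cancel_left₀ hx]
            · intro h; rw [h, mul_inv_cancel_left₀ hx]
          simp only [hcond, mul_ite, mul_zero]
          rw [Finset.sum_ite_eq' univ (x⁻¹ * a)
            (fun y => ζ ^ (Algebra.trace (ZMod p) F x).val
              * ζ ^ (Algebra.trace (ZMod p) F y).val * ((m : ℕ) : R)),
            if_pos (mem_univ _)]
          congr 1
          rw [show x + a * x⁻¹ = x + x⁻¹ * a by ring, mu_add hp hζ]
      calc ∑ j ∈ range m, gaussG p F R ζ ω j ^ 2 * ω a ^ j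
          = ∑ j ∈ range m, ∑ x : F, ∑ y : F,
              (ζ ^ (Algebra.trace (ZMod p) F x).val * ζ ^ (Algebra.trace (ZMod p) F y).val)
                * (ω (x * y) ^ (m - j) * ω a ^ j) :=
            Finset.sum_congr rfl fun j _ => e1 j
        _ = ∑ x : F, ∑ y : F,
              (ζ ^ (Algebra.trace (ZMod p) F x).val * ζ ^ (Algebra.trace (ZMod p) F y).val)
                * ∑ j ∈ range m, ω (x * y) ^ (m - j) * ω a ^ j := by
            rw [Finset.sum_comm]
            refine Finset.sum_congr rfl fun x _ => ?_
            rw [Finset.sum_comm]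
            refine Finset.sum_congr rfl fun y _ => ?_
            rw [Finset.mul_sum]
        _ = ∑ x : F, ∑ y : F,
              (ζ ^ (Algebra.trace (ZMod p) F x).val * ζ ^ (Algebra.trace (ZMod p) F y).val)
                * (if x * y = a then ((m : ℕ) : R) else 0) := by
            refine Finset.sum_congr rfl fun x _ => Finset.sum_congr rfl fun y _ => ?_
            rw [ortho ω ρ hρω ha (x * y)]
        _ = ∑ x : F, if x = 0 then 0
              else ζ ^ (Algebra.trace (ZMod p) F (x + a * x⁻¹)).val * ((m : ℕ) : R) :=
            Finset.sum_congr rfl fun x _ => e2 x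
        _ = ∑ x ∈ univ.erase (0:F),
              ζ ^ (Algebra.trace (ZMod p) F (x + a * x⁻¹)).val * ((m : ℕ) : R) := by
            rw [← Finset.sum_erase univ (by rw [if_pos rfl])]
            exact Finset.sum_congr rfl fun x hx => by rw [if_neg (mem_erase.mp hx).1]
        _ = ((m : ℕ) : R) * ∑ x ∈ univ.erase (0:F),
              ζ ^ (Algebra.trace (ZMod p) F (x + a * x⁻¹)).val := by
            rw [Finset.mul_sum]
            exact Finset.sum_congr rfl fun x _ => mul_comm _ _
    -- Step D : split off j = 0
    have hsplit : ∑ j ∈ range m, gaussG p F R ζ ω j ^ 2 * ω a ^ j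
        = 1 + ∑ j ∈ Icc 1 (Fintype.card F - 2), gaussG p F R ζ ω j ^ 2 * ω a ^ j := by
      rw [Finset.range_eq_Ico, Finset.sum_eq_sum_Ico_succ_bot hm0, hg0, one_pow,
        pow_zero, mul_one, show m = (Fintype.card F - 2) + 1 by omega, Finset.Ico_add_one_right_eq_Icc]
    -- Step E : conclude
    have hcast : ((m : ℕ) : R) = ((Fintype.card F : ℕ) : R) - 1 := by
      rw [hmdef, Nat.cast_sub (by omega), Nat.cast_one]
    refine ⟨KloostermanR p F R ζ a - 1, ?_⟩
    linear_combination (1 - ((Fintype.card F : ℕ) : R)) * hK + hT - hsplit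
      + (∑ x ∈ univ.erase (0:F),
          ζ ^ (Algebra.trace (ZMod p) F (x + a * x⁻¹)).val) * hcast
end

section
/- For q = 3^n and a ∈ F_q, the identity Tr(a)·τ_X(a) = Tr(a) + 2·τ_Z(a) holds in F_3, where τ_X(a) = Σ_{r∈X} a^r with X = {r ∈ {0,…,q-2} : r = 3^i+3^j}, and τ_Z(a) = Σ_{r∈Z} a^r with Z = {r ∈ {0,…,q-2} : r = 2·3^i+3^j, i ≠ j}. -/
open Finset

/-- `X = {r ∈ {0,…,q-2} : r ≡ 3^i + 3^j (mod q-1)}`, `i, j` not necessarily distinct. -/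
def setX (n : ℕ) : Finset ℕ :=
  (range n ×ˢ range n).image (fun ij => (3 ^ ij.1 + 3 ^ ij.2) % (3 ^ n - 1))

/-- `Z = {r ∈ {0,…,q-2} : r ≡ 2·3^i + 3^j (mod q-1), i ≠ j}`. -/
def setZ (n : ℕ) : Finset ℕ :=
  ((range n ×ˢ range n).filter (fun ij => ij.1 ≠ ij.2)).image
    (fun ij => (2 * 3 ^ ij.1 + 3 ^ ij.2) % (3 ^ n - 1))

private lemma top_det {s j l : ℕ} (h1 : 3^j ≤ s) (h2 : s < 3^(j+1)) (h3 : 3^l ≤ s)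
    (h4 : s < 3^(l+1)) : j = l := by
  by_contra hne
  rcases Nat.lt_or_ge j l with hlt | hge
  · have : (3:ℕ)^(j+1) ≤ 3^l := Nat.pow_le_pow_right (by norm_num) hlt
    omega
  · have hlt : l < j := by omega
    have : (3:ℕ)^(l+1) ≤ 3^j := Nat.pow_le_pow_right (by norm_num) hlt
    omega

private lemma injX {i j k l : ℕ} (hij : i ≤ j) (hkl : k ≤ l)
    (h : 3^i + 3^j = 3^k + 3^l) : i = k ∧ j = l := by
  have hi : (3:ℕ)^i ≤ 3^j := Nat.pow_le_pow_right (by norm_num) hij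
  have hk : (3:ℕ)^k ≤ 3^l := Nat.pow_le_pow_right (by norm_num) hkl
  have pj : 0 < (3:ℕ)^j := Nat.pow_pos (by norm_num)
  have pl : 0 < (3:ℕ)^l := Nat.pow_pos (by norm_num)
  have pi' : 0 < (3:ℕ)^i := Nat.pow_pos (by norm_num)
  have pk' : 0 < (3:ℕ)^k := Nat.pow_pos (by norm_num)
  have e1 : (3:ℕ)^(j+1) = 3*3^j := by ring
  have e2 : (3:ℕ)^(l+1) = 3*3^l := by ring
  have hjl : j = l := top_det (s := 3^i+3^j) (by omega) (by omega) (by omega) (by omega)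
  subst hjl
  have : (3:ℕ)^i = 3^k := by omega
  exact ⟨Nat.pow_right_injective (by norm_num) this, rfl⟩

private lemma injZ {i j k l : ℕ} (hij : i ≠ j) (hkl : k ≠ l)
    (h : 2*3^i + 3^j = 2*3^k + 3^l) : i = k ∧ j = l := by
  have e1 : ∀ m : ℕ, (3:ℕ)^(m+1) = 3*3^m := fun m => by ring
  have p : ∀ m : ℕ, 0 < (3:ℕ)^m := fun m => Nat.pow_pos (by norm_num)
  rcases lt_or_gt_of_ne hij with h1 | h1 <;> rcases lt_or_gt_of_ne hkl with h2 | h2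
  · -- i < j, k < l : top exponents j, l
    have a1 : (3:ℕ)^(i+1) ≤ 3^j := Nat.pow_le_pow_right (by norm_num) h1
    have a2 : (3:ℕ)^(k+1) ≤ 3^l := Nat.pow_le_pow_right (by norm_num) h2
    have hjl : j = l := top_det (s := 2*3^i+3^j)
      (by have := e1 i; have := p i; omega) (by have := e1 i; have := e1 j; have := p j; omega)
      (by have := e1 k; have := p k; omega) (by have := e1 k; have := e1 l; have := p l; omega)
    subst hjl
    have : (3:ℕ)^i = 3^k := by omega
    exact ⟨Nat.pow_right_injective (by norm_num) this, rfl⟩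
  · -- i < j, k > l : top exponents j, k, contradiction
    have a1 : (3:ℕ)^(i+1) ≤ 3^j := Nat.pow_le_pow_right (by norm_num) h1
    have a2 : (3:ℕ)^(l+1) ≤ 3^k := Nat.pow_le_pow_right (by norm_num) h2
    have hjk : j = k := top_det (s := 2*3^i+3^j)
      (by have := e1 i; have := p i; omega) (by have := e1 i; have := e1 j; have := p j; omega)
      (by have := e1 l; have := p l; omega) (by have := e1 l; have := e1 k; have := p k; omega)
    subst hjk
    -- now 2*3^i + 3^j = 2*3^j + 3^l with 3*3^i ≤ 3^j, 3*3^l ≤ 3^j : impossible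
    have := e1 i; have := e1 l; have := p i; have := p l; omega
  · -- i > j, k < l : symmetric contradiction
    have a1 : (3:ℕ)^(j+1) ≤ 3^i := Nat.pow_le_pow_right (by norm_num) h1
    have a2 : (3:ℕ)^(k+1) ≤ 3^l := Nat.pow_le_pow_right (by norm_num) h2
    have hil : i = l := top_det (s := 2*3^i+3^j)
      (by have := e1 j; have := p j; omega) (by have := e1 j; have := e1 i; have := p i; omega)
      (by have := e1 k; have := p k; omega) (by have := e1 k; have := e1 l; have := p l; omega)
    subst hil
    have := e1 j; have := e1 k; have := p j; have := p k; omega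
  · -- i > j, k > l : top exponents i, k
    have a1 : (3:ℕ)^(j+1) ≤ 3^i := Nat.pow_le_pow_right (by norm_num) h1
    have a2 : (3:ℕ)^(l+1) ≤ 3^k := Nat.pow_le_pow_right (by norm_num) h2
    have hik : i = k := top_det (s := 2*3^i+3^j)
      (by have := e1 j; have := p j; omega) (by have := e1 j; have := e1 i; have := p i; omega)
      (by have := e1 l; have := p l; omega) (by have := e1 l; have := e1 k; have := p k; omega)
    subst hik
    have : (3:ℕ)^j = 3^l := by omega
    exact ⟨rfl, Nat.pow_right_injective (by norm_num) this⟩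

private lemma boundX {n i j : ℕ} (hn : 2 ≤ n) (hi : i < n) (hj : j < n) :
    3^i + 3^j < 3^n - 1 := by
  have h1 : (3:ℕ)^i ≤ 3^(n-1) := Nat.pow_le_pow_right (by norm_num) (by omega)
  have h2 : (3:ℕ)^j ≤ 3^(n-1) := Nat.pow_le_pow_right (by norm_num) (by omega)
  have h3 : (3:ℕ)^n = 3 * 3^(n-1) := by
    conv_lhs => rw [show n = (n-1)+1 by omega]
    ring
  have h4 : (3:ℕ)^1 ≤ 3^(n-1) := Nat.pow_le_pow_right (by norm_num) (by omega)
  simp only [pow_one] at h4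
  omega

private lemma boundZ {n i j : ℕ} (hn : 2 ≤ n) (hi : i < n) (hj : j < n) (hij : i ≠ j) :
    2*3^i + 3^j < 3^n - 1 := by
  have h3 : (3:ℕ)^n = 9 * 3^(n-2) := by
    conv_lhs => rw [show n = (n-2)+2 by omega]
    ring
  have h5 : (3:ℕ)^(n-1) = 3 * 3^(n-2) := by
    conv_lhs => rw [show n-1 = (n-2)+1 by omega]
    ring
  have h4 : 1 ≤ (3:ℕ)^(n-2) := Nat.one_le_pow _ _ (by norm_num)
  rcases lt_or_gt_of_ne hij with h | h
  · have h1 : (3:ℕ)^i ≤ 3^(n-2) := Nat.pow_le_pow_right (by norm_num) (by omega)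
    have h2 : (3:ℕ)^j ≤ 3^(n-1) := Nat.pow_le_pow_right (by norm_num) (by omega)
    omega
  · have h1 : (3:ℕ)^i ≤ 3^(n-1) := Nat.pow_le_pow_right (by norm_num) (by omega)
    have h2 : (3:ℕ)^j ≤ 3^(n-2) := Nat.pow_le_pow_right (by norm_num) (by omega)
    omega

private lemma setX_eq {n : ℕ} (hn : 2 ≤ n) :
    setX n = ((range n ×ˢ range n).filter (fun ij => ij.1 ≤ ij.2)).image
      (fun ij => 3 ^ ij.1 + 3 ^ ij.2) := by
  unfold setX
  ext r
  simp only [mem_image, mem_filter, mem_product, mem_range, Prod.exists]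
  constructor
  · rintro ⟨i, j, ⟨hi, hj⟩, rfl⟩
    rw [Nat.mod_eq_of_lt (boundX hn hi hj)]
    rcases le_total i j with h | h
    · exact ⟨i, j, ⟨⟨hi, hj⟩, h⟩, rfl⟩
    · exact ⟨j, i, ⟨⟨hj, hi⟩, h⟩, by omega⟩
  · rintro ⟨i, j, ⟨⟨hi, hj⟩, _⟩, rfl⟩
    exact ⟨i, j, ⟨hi, hj⟩, Nat.mod_eq_of_lt (boundX hn hi hj)⟩

private lemma setZ_eq {n : ℕ} (hn : 2 ≤ n) :
    setZ n = ((range n ×ˢ range n).filter (fun ij => ij.1 ≠ ij.2)).image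
      (fun ij => 2 * 3 ^ ij.1 + 3 ^ ij.2) := by
  unfold setZ
  apply Finset.image_congr
  rintro ⟨i, j⟩ hij
  simp only [coe_filter, mem_product, mem_range, Set.mem_setOf_eq] at hij
  exact Nat.mod_eq_of_lt (boundZ hn hij.1.1 hij.1.2 hij.2)

/-- The identity `Tr(a)·τ_X(a) = Tr(a) + 2·τ_Z(a)` in `F_3` (all terms lie in the
prime field; the identity is stated inside `F_{3^n}`). -/
theorem trace_mul_tauX (n : ℕ) (hn : 1 ≤ n)
    (F : Type) [Field F] [Fintype F] (hF : Fintype.card F = 3 ^ n) (a : F) :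
    (∑ i ∈ range n, a ^ (3 ^ i)) * (∑ r ∈ setX n, a ^ r) =
      (∑ i ∈ range n, a ^ (3 ^ i)) + 2 * ∑ r ∈ setZ n, a ^ r := by
  -- characteristic 3
  have h30 : (3 : F) = 0 := by
    have hc := FiniteField.cast_card_eq_zero F
    rw [hF] at hc
    push_cast at hc
    exact pow_eq_zero_iff (by omega) |>.mp hc
  haveI hp3 : Fact (Nat.Prime 3) := ⟨by norm_num⟩
  haveI hchar : CharP F 3 := by
    have hdvd : ringChar F ∣ 3 := ringChar.dvd h30
    have hprime : (ringChar F).Prime := CharP.char_is_prime F (ringChar F)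
    have : ringChar F = 3 := (Nat.prime_dvd_prime_iff_eq hprime (by norm_num)).mp hdvd
    rw [← this]; exact ringChar.charP F
  -- n = 1 case
  rcases eq_or_lt_of_le hn with h1 | hn2
  · subst h1
    have hX : setX 1 = {0} := by decide
    have hZ : setZ 1 = ∅ := by decide
    simp [hX, hZ]
  have hn2 : 2 ≤ n := hn2
  -- abbreviations
  set T : F := ∑ i ∈ range n, a ^ (3 ^ i) with hT
  set D : F := ∑ i ∈ range n, a ^ (2 * 3 ^ i) with hD
  set S : Finset (ℕ × ℕ) := range n ×ˢ range n with hS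
  -- a ^ (3 ^ n) = a
  have hq : a ^ (3 ^ n) = a := by rw [← hF]; exact FiniteField.pow_card a
  -- shift lemma : ∑ a^(3^(i+1)) = T
  have hshift : ∑ i ∈ range n, a ^ (3 ^ (i+1)) = T := by
    have h1 := Finset.sum_range_succ (fun i => a ^ (3 ^ i)) n
    have h2 := Finset.sum_range_succ' (fun i => a ^ (3 ^ i)) n
    simp only [pow_zero, pow_one] at h1 h2
    rw [hT]
    rw [h2, hq] at h1
    linear_combination h1
  -- T^3 = T
  have hT3 : T * T * T = T := by
    have : T ^ 3 = ∑ i ∈ range n, (a ^ (3 ^ i)) ^ 3 := sum_pow_char 3 _ _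
    have h2 : ∑ i ∈ range n, (a ^ (3 ^ i)) ^ 3 = ∑ i ∈ range n, a ^ (3 ^ (i+1)) := by
      apply Finset.sum_congr rfl
      intro i _
      rw [← pow_mul, pow_succ]
    calc T * T * T = T ^ 3 := by ring
    _ = T := by rw [this, h2, hshift]
  -- T * T = ∑ over S
  have hTT : T * T = ∑ ij ∈ S, a ^ (3 ^ ij.1 + 3 ^ ij.2) := by
    rw [hT, hS, Finset.sum_mul_sum, Finset.sum_product]
    simp [pow_add]
  -- sum over setX
  have hsumX : ∑ r ∈ setX n, a ^ r =
      ∑ ij ∈ S.filter (fun ij => ij.1 ≤ ij.2), a ^ (3 ^ ij.1 + 3 ^ ij.2) := by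
    rw [setX_eq hn2]
    apply Finset.sum_image
    rintro ⟨i, j⟩ hij ⟨k, l⟩ hkl h
    simp only [hS, mem_coe, mem_filter, mem_product, mem_range] at hij hkl
    obtain ⟨h1, h2⟩ := injX hij.2 hkl.2 h
    simp [h1, h2]
  -- sum over setZ
  have hsumZ : ∑ r ∈ setZ n, a ^ r =
      ∑ ij ∈ S.filter (fun ij => ij.1 ≠ ij.2), a ^ (2 * 3 ^ ij.1 + 3 ^ ij.2) := by
    rw [setZ_eq hn2]
    apply Finset.sum_image
    rintro ⟨i, j⟩ hij ⟨k, l⟩ hkl h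
    simp only [hS, mem_coe, mem_filter, mem_product, mem_range] at hij hkl
    obtain ⟨h1, h2⟩ := injZ hij.2 hkl.2 h
    simp [h1, h2]
  -- diagonal sum
  have hdiag : ∑ ij ∈ S.filter (fun ij => ij.1 = ij.2), a ^ (3 ^ ij.1 + 3 ^ ij.2) = D := by
    rw [hD]
    apply Finset.sum_nbij' (fun ij => ij.1) (fun i => (i, i))
    · rintro ⟨i, j⟩ hij
      simp only [hS, mem_filter, mem_product, mem_range] at hij
      simp [hij.1.1]
    · intro i hi
      simp only [mem_range] at hi
      simp [hS, hi]
    · rintro ⟨i, j⟩ hij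
      simp only [hS, mem_filter, mem_product, mem_range] at hij
      simp [hij.2]
    · intro i _; rfl
    · rintro ⟨i, j⟩ hij
      simp only [hS, mem_filter, mem_product, mem_range] at hij
      rw [hij.2]; ring_nf
  -- swap : sum over strict upper = sum over strict lower
  have hswap : ∑ ij ∈ S.filter (fun ij => ¬ ij.1 ≤ ij.2), a ^ (3 ^ ij.1 + 3 ^ ij.2) =
      ∑ ij ∈ S.filter (fun ij => ij.1 < ij.2), a ^ (3 ^ ij.1 + 3 ^ ij.2) := by
    apply Finset.sum_nbij' (fun ij => (ij.2, ij.1)) (fun ij => (ij.2, ij.1))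
    · rintro ⟨i, j⟩ hij
      simp only [hS, mem_filter, mem_product, mem_range] at hij ⊢
      exact ⟨⟨hij.1.2, hij.1.1⟩, by omega⟩
    · rintro ⟨i, j⟩ hij
      simp only [hS, mem_filter, mem_product, mem_range] at hij ⊢
      exact ⟨⟨hij.1.2, hij.1.1⟩, by omega⟩
    · intro _ _; rfl
    · intro _ _; rfl
    · rintro ⟨i, j⟩ _
      simp [add_comm]
  -- split P into strict and diagonal
  have hsplitP : ∑ ij ∈ S.filter (fun ij => ij.1 ≤ ij.2), a ^ (3 ^ ij.1 + 3 ^ ij.2) =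
      ∑ ij ∈ S.filter (fun ij => ij.1 < ij.2), a ^ (3 ^ ij.1 + 3 ^ ij.2) + D := by
    have h := Finset.sum_filter_add_sum_filter_not (S.filter (fun ij => ij.1 ≤ ij.2))
      (fun ij => ij.1 < ij.2) (fun ij => a ^ (3 ^ ij.1 + 3 ^ ij.2))
    have e1 : (S.filter (fun ij => ij.1 ≤ ij.2)).filter (fun ij => ij.1 < ij.2) =
        S.filter (fun ij => ij.1 < ij.2) := by
      rw [Finset.filter_filter]
      apply Finset.filter_congr
      intro ij _
      constructor <;> intro h' <;> omega
    have e2 : (S.filter (fun ij => ij.1 ≤ ij.2)).filter (fun ij => ¬ ij.1 < ij.2) =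
        S.filter (fun ij => ij.1 = ij.2) := by
      rw [Finset.filter_filter]
      apply Finset.filter_congr
      intro ij _
      constructor <;> intro h' <;> omega
    rw [e1, e2, hdiag] at h
    linear_combination -h
  -- split S into ≤ and ¬≤
  have hsplitS : ∑ ij ∈ S, a ^ (3 ^ ij.1 + 3 ^ ij.2) =
      ∑ ij ∈ S.filter (fun ij => ij.1 ≤ ij.2), a ^ (3 ^ ij.1 + 3 ^ ij.2) +
      ∑ ij ∈ S.filter (fun ij => ij.1 < ij.2), a ^ (3 ^ ij.1 + 3 ^ ij.2) := by
    rw [← Finset.sum_filter_add_sum_filter_not S (fun ij => ij.1 ≤ ij.2)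
      (fun ij => a ^ (3 ^ ij.1 + 3 ^ ij.2)), hswap]
  -- key : τ_X = 2*(T*T) + 2*D
  have hX2 : ∑ r ∈ setX n, a ^ r = 2 * (T * T) + 2 * D := by
    rw [hsumX, hTT]
    -- ∑_P = 2 * ∑_S + 2*D, with ∑_S = 2∑_P - D in ℤ sense; use 3 = 0
    have hPS : ∑ ij ∈ S, a ^ (3 ^ ij.1 + 3 ^ ij.2) + D =
        2 * ∑ ij ∈ S.filter (fun ij => ij.1 ≤ ij.2), a ^ (3 ^ ij.1 + 3 ^ ij.2) := by
      rw [hsplitS, hsplitP]; ring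
    have h3P : (3 : F) * ∑ ij ∈ S.filter (fun ij => ij.1 ≤ ij.2), a ^ (3 ^ ij.1 + 3 ^ ij.2)
        = 0 := by rw [h30]; ring
    linear_combination -2 * hPS - h3P
  -- T * D = τ_Z + T
  have hTD : T * D = (∑ r ∈ setZ n, a ^ r) + T := by
    have hTD1 : T * D = ∑ ij ∈ S, a ^ (2 * 3 ^ ij.1 + 3 ^ ij.2) := by
      rw [show T * D = D * T from mul_comm T D, hT, hD, hS, Finset.sum_mul_sum, Finset.sum_product]
      simp [pow_add]
    have hsplit := Finset.sum_filter_add_sum_filter_not S (fun ij => ij.1 ≠ ij.2)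
      (fun ij => a ^ (2 * 3 ^ ij.1 + 3 ^ ij.2))
    have hdiag2 : ∑ ij ∈ S.filter (fun ij => ¬ ij.1 ≠ ij.2), a ^ (2 * 3 ^ ij.1 + 3 ^ ij.2)
        = T := by
      rw [← hshift]
      apply Finset.sum_nbij' (fun ij => ij.1) (fun i => (i, i))
      · rintro ⟨i, j⟩ hij
        simp only [hS, mem_filter, mem_product, mem_range] at hij
        simp [hij.1.1]
      · intro i hi
        simp only [mem_range] at hi
        simp [hS, hi]
      · rintro ⟨i, j⟩ hij
        simp only [hS, mem_filter, mem_product, mem_range, ne_eq, not_not] at hij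
        simp [hij.2]
      · intro i _; rfl
      · rintro ⟨i, j⟩ hij
        simp only [hS, mem_filter, mem_product, mem_range, ne_eq, not_not] at hij
        rw [hij.2, pow_succ]
        ring_nf
    rw [hTD1, ← hsplit, hdiag2, hsumZ]
  rw [hX2]
  -- goal : T * (2*(T*T) + 2*D) = T + 2*τ_Z
  have hfin : T * (2 * (T * T) + 2 * D) = 2 * (T * T * T) + 2 * (T * D) := by ring
  rw [hfin, hT3, hTD]
  have h3T : (3 : F) * T = 0 := by rw [h30]; ring
  linear_combination h3T
end

section
/- Let p be an odd prime, q = p^n, a ∈ F_q, and let m_a(x) be the minimal polynomial of K_q(a) over ℚ, of degree t. Then m_a(x) ≡ x^t (mod p), i.e., every coefficient of m_a other than the leading one is divisible by p. -/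
open Finset Polynomial

/-- The Kloosterman sum `K_q(a) = Σ_{x ∈ F_q} ζ^{Tr(x⁻¹ + a x)}` (with `0⁻¹ = 0`). -/
noncomputable def Kloosterman (p : ℕ) (F : Type) [Field F] [Fintype F]
    [Algebra (ZMod p) F] (ζ : ℂ) (a : F) : ℂ :=
  ∑ x : F, ζ ^ (Algebra.trace (ZMod p) F (x⁻¹ + a * x)).val

set_option maxHeartbeats 1000000 in
set_option synthInstance.maxHeartbeats 400000 in
/-- Every coefficient of the minimal polynomial of `K_q(a)` over `ℚ`, other than
the leading one, is an integer divisible by `p`; i.e. `m_a(x) ≡ x^t (mod p)`. -/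
theorem minpoly_kloosterman_mod_p (p n : ℕ) (hp : p.Prime) (hodd : Odd p)
    (hn : 0 < n) (F : Type) [Field F] [Fintype F] [Algebra (ZMod p) F]
    (hF : Fintype.card F = p ^ n)
    (ζ : ℂ) (hζ : IsPrimitiveRoot ζ p) (a : F) :
    ∀ k < (minpoly ℚ (Kloosterman p F ζ a)).natDegree,
      ∃ c : ℤ, (minpoly ℚ (Kloosterman p F ζ a)).coeff k = (c : ℚ) ∧ (p : ℤ) ∣ c := by
  classical
  haveI : Fact p.Prime := ⟨hp⟩
  haveI : NeZero p := ⟨hp.pos.ne'⟩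
  intro k hk
  have hp0 : 0 < p := hp.pos
  set e : F → ℕ := fun x => (Algebra.trace (ZMod p) F (x⁻¹ + a * x)).val with he
  have hKdef : Kloosterman p F ζ a = ∑ x : F, ζ ^ e x := rfl
  have hζint : IsIntegral ℤ ζ := hζ.isIntegral hp0
  have hKint : IsIntegral ℤ (Kloosterman p F ζ a) := by
    rw [hKdef]
    exact IsIntegral.sum _ fun x _ => hζint.pow _
  have hmin : minpoly ℚ (Kloosterman p F ζ a)
      = (minpoly ℤ (Kloosterman p F ζ a)).map (algebraMap ℤ ℚ) :=
    minpoly.isIntegrallyClosed_eq_field_fractions' ℚ hKint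
  set M := minpoly ℤ (Kloosterman p F ζ a) with hMdef
  have hMmonic : M.Monic := minpoly.monic hKint
  have hdeg : (minpoly ℚ (Kloosterman p F ζ a)).natDegree = M.natDegree := by
    rw [hmin]; exact hMmonic.natDegree_map _
  -- the subring `ℤ[ζ]` of `ℂ` and the ring hom to `ZMod p` sending `ζ ↦ 1`
  set O : Subalgebra ℤ ℂ := Algebra.adjoin ℤ ({ζ} : Set ℂ) with hO
  set ζO : O := ⟨ζ, Algebra.self_mem_adjoin_singleton ℤ ζ⟩ with hζO
  have hcyc : minpoly ℤ ζ = Polynomial.cyclotomic p ℤ :=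
    (Polynomial.cyclotomic_eq_minpoly hζ hp0).symm
  have hroot1 : (minpoly ℤ ζ).eval₂ (Int.castRingHom (ZMod p)) 1 = 0 := by
    rw [hcyc, Polynomial.eval₂_eq_eval_map, Polynomial.map_cyclotomic]
    rw [Polynomial.eval_one_cyclotomic_prime, ZMod.natCast_self]
  set E := minpoly.equivAdjoin hζint with hE
  set g : O →+* ZMod p :=
    (AdjoinRoot.lift (Int.castRingHom (ZMod p)) 1 hroot1).comp
      (E.symm : O →ₐ[ℤ] AdjoinRoot (minpoly ℤ ζ)).toRingHom with hg
  have hEroot : E (AdjoinRoot.root (minpoly ℤ ζ)) = ζO := by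
    rw [hE, ← AdjoinRoot.mk_X]
    exact Subtype.ext (AdjoinRoot.Minpoly.coe_toAdjoin_mk_X (R := ℤ) (x := ζ))
  have hgζ : g ζO = 1 := by
    have h1 : E.symm ζO = AdjoinRoot.root (minpoly ℤ ζ) := by
      rw [← hEroot, AlgEquiv.symm_apply_apply]
    show (AdjoinRoot.lift (Int.castRingHom (ZMod p)) 1 hroot1) (E.symm ζO) = 1
    rw [h1, AdjoinRoot.lift_root]
  -- the intermediate field ℚ(ζ)
  set L : IntermediateField ℚ ℂ := IntermediateField.adjoin ℚ {ζ} with hL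
  have hζQ : IsIntegral ℚ ζ := hζint.tower_top
  haveI : FiniteDimensional ℚ L := IntermediateField.adjoin.finiteDimensional hζQ
  set ζL : L := ⟨ζ, IntermediateField.mem_adjoin_simple_self ℚ ζ⟩ with hζL
  set KL : L := ∑ x : F, ζL ^ e x with hKL
  have hKLcoe : algebraMap L ℂ KL = Kloosterman p F ζ a := by
    rw [hKL, hKdef, map_sum]
    simp only [map_pow]
    rfl
  -- the roots of M over ℂ
  set Mc := M.map (algebraMap ℤ ℂ) with hMc
  have hMcmonic : Mc.Monic := hMmonic.map _
  have hsplits : Mc.Splits := IsAlgClosed.splits Mc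
  have hfact : Mc = (Mc.roots.map fun r => X - C r).prod :=
    Polynomial.Splits.eq_prod_roots_of_monic hsplits hMcmonic
  have hcard : Mc.roots.card = M.natDegree := by
    have h1 := (Polynomial.splits_iff_card_roots).mp hsplits
    rwa [hMc, hMmonic.natDegree_map] at h1
  -- each root of M over ℂ comes from an element of ℤ[ζ] killed by g
  have hex : ∀ r ∈ Mc.roots, ∃ ρ : O, algebraMap O ℂ ρ = r ∧ g ρ = 0 := by
    intro r hr
    have hrroot : Polynomial.aeval r (minpoly ℚ KL) = 0 := by
      have h1 : minpoly ℚ KL = minpoly ℚ (Kloosterman p F ζ a) := by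
        rw [← hKLcoe]
        exact (minpoly.algebraMap_eq (algebraMap L ℂ).injective KL).symm
      rw [h1, hmin, Polynomial.aeval_def, Polynomial.eval₂_eq_eval_map,
        Polynomial.map_map, ← IsScalarTower.algebraMap_eq]
      exact Polynomial.isRoot_of_mem_roots hr
    obtain ⟨φ, hφ⟩ := IntermediateField.exists_algHom_of_splits_of_aeval
      (fun s => ⟨IsIntegral.of_finite ℚ s, IsAlgClosed.splits _⟩) hrroot
    have hφζp : (φ ζL) ^ p = 1 := by
      rw [← map_pow]
      have h2 : ζL ^ p = 1 := by
        apply Subtype.ext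
        push_cast
        exact hζ.pow_eq_one
      rw [h2, map_one]
    obtain ⟨i, -, hi⟩ := hζ.eq_pow_of_pow_eq_one hφζp
    refine ⟨∑ x : F, ζO ^ (i * e x), ?_, ?_⟩
    · rw [map_sum]
      simp only [map_pow]
      have h3 : algebraMap O ℂ ζO = ζ := rfl
      rw [← hφ, hKL, map_sum]
      refine Finset.sum_congr rfl fun x _ => ?_
      rw [map_pow, ← hi, h3, ← pow_mul]
    · rw [map_sum]
      simp only [map_pow, hgζ, one_pow]
      rw [Finset.sum_const, Finset.card_univ, hF, nsmul_eq_mul, mul_one]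
      push_cast
      rw [ZMod.natCast_self, zero_pow hn.ne']
  -- lift the roots to ℤ[ζ]
  set f : ℂ → O := fun r =>
    if h : ∃ ρ : O, algebraMap O ℂ ρ = r ∧ g ρ = 0 then h.choose else 0 with hf
  have hfspec : ∀ r ∈ Mc.roots, algebraMap O ℂ (f r) = r ∧ g (f r) = 0 := by
    intro r hr
    have h := hex r hr
    simp only [hf, dif_pos h]
    exact h.choose_spec
  have hOinj : Function.Injective (algebraMap O ℂ) := Subtype.val_injective
  have hlift : M.map (algebraMap ℤ O) = ((Mc.roots.map f).map fun ρ => X - C ρ).prod := by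
    apply Polynomial.map_injective (algebraMap O ℂ) hOinj
    rw [Polynomial.map_map]
    have hcomp : (algebraMap O ℂ).comp (algebraMap ℤ O) = algebraMap ℤ ℂ :=
      RingHom.ext_int _ _
    have h4 : Multiset.map ((Polynomial.map (algebraMap O ℂ) ∘ fun ρ => X - C ρ) ∘ f) Mc.roots
        = Multiset.map (fun r => X - C r) Mc.roots := by
      apply Multiset.map_congr rfl
      intro r hr
      simp only [Function.comp_apply, Polynomial.map_sub, Polynomial.map_X, Polynomial.map_C,
        (hfspec r hr).1]
    rw [hcomp, ← hMc, Polynomial.map_multiset_prod, Multiset.map_map, Multiset.map_map, h4,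
      ← hfact]
  have hmodp : M.map (Int.castRingHom (ZMod p)) = X ^ M.natDegree := by
    have h1 : M.map (Int.castRingHom (ZMod p)) = (M.map (algebraMap ℤ O)).map g := by
      rw [Polynomial.map_map]
      congr 1
      exact RingHom.ext_int _ _
    have h2 : Multiset.map ((Polynomial.map g ∘ fun ρ => X - C ρ) ∘ f) Mc.roots
        = Multiset.map (fun _ => (X : (ZMod p)[X])) Mc.roots := by
      apply Multiset.map_congr rfl
      intro r hr
      simp only [Function.comp_apply, Polynomial.map_sub, Polynomial.map_X, Polynomial.map_C,
        (hfspec r hr).2, map_zero, sub_zero]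
    rw [h1, hlift, Polynomial.map_multiset_prod, Multiset.map_map, Multiset.map_map, h2,
      Multiset.map_const', Multiset.prod_replicate, hcard]
  refine ⟨M.coeff k, ?_, ?_⟩
  · rw [hmin, Polynomial.coeff_map]
    simp
  · rw [← ZMod.intCast_zmod_eq_zero_iff_dvd]
    have h3 := congrArg (fun q : (ZMod p)[X] => q.coeff k) hmodp
    simp only [Polynomial.coeff_map, Polynomial.coeff_X_pow] at h3
    rw [hdeg] at hk
    rw [if_neg hk.ne] at h3
    simpa using h3
end
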